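/- arXiv:2209.12976 — 3 statements merged into one kernel-verified Lean document; each statement's English description precedes it below -/
import Mathlib

section
/- Let K ≥ 1, let t ∈ {1,…,K}, and fix positive reals R_k > 0 for all k ≠ t. Then the function r ↦ g_K(R_1,…,R_{t-1}, r, R_{t+1},…,R_K) is convex on the interval (0,∞). -/
open MeasureTheory

/-- `gK K R` is the `K`-dimensional Lebesgue volume of the region
`{ t ∈ (0,∞)^K : Σ_k log₂(1 + t_k) / R_k < 1 }`. -/
noncomputable def gK (K : ℕ) (R : Fin K → ℝ) : ℝ :=
  (volume {t : Fin K → ℝ |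
    (∀ k, 0 < t k) ∧ ∑ k, Real.logb 2 (1 + t k) / R k < 1}).toReal

open Real Set in
private lemma gk_meas_sum {m : ℕ} (c : Fin m → ℝ) :
    Measurable fun p : Fin m → ℝ => ∑ k, Real.logb 2 (1 + p k) / c k := by
  apply Finset.measurable_sum
  intro k _
  simp only [Real.logb]
  exact ((Real.measurable_log.comp
    (measurable_const.add (measurable_pi_apply k))).div_const _).div_const _

open Real Set in
private lemma gk_meas_S {m : ℕ} (c : Fin m → ℝ) :
    MeasurableSet {p : Fin m → ℝ | (∀ k, 0 < p k) ∧
      ∑ k, Real.logb 2 (1 + p k) / c k < 1} := by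
  have h1 : MeasurableSet {p : Fin m → ℝ | ∀ k, 0 < p k} := by
    have : {p : Fin m → ℝ | ∀ k, 0 < p k} = Set.pi Set.univ (fun _ => Set.Ioi 0) := by
      ext p; simp [Set.mem_pi]
    rw [this]
    exact MeasurableSet.univ_pi fun _ => measurableSet_Ioi
  exact h1.inter (measurableSet_lt (gk_meas_sum c) measurable_const)

open Real Set in
private lemma gk_S_finite {m : ℕ} (c : Fin m → ℝ) (hc : ∀ k, 0 < c k) :
    volume {p : Fin m → ℝ | (∀ k, 0 < p k) ∧
      ∑ k, Real.logb 2 (1 + p k) / c k < 1} ≠ ⊤ := by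
  have hsub : {p : Fin m → ℝ | (∀ k, 0 < p k) ∧ ∑ k, Real.logb 2 (1 + p k) / c k < 1}
      ⊆ Set.pi Set.univ (fun k => Set.Ioo 0 ((2:ℝ) ^ (c k))) := by
    rintro p ⟨hp, hsum⟩ k _
    refine ⟨hp k, ?_⟩
    have hterm : ∀ j, 0 ≤ Real.logb 2 (1 + p j) / c j := fun j =>
      div_nonneg (Real.logb_nonneg one_lt_two (by linarith [hp j])) (hc j).le
    have hle : Real.logb 2 (1 + p k) / c k ≤ ∑ j, Real.logb 2 (1 + p j) / c j :=
      Finset.single_le_sum (fun j _ => hterm j) (Finset.mem_univ k)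
    have h1 : Real.logb 2 (1 + p k) / c k < 1 := lt_of_le_of_lt hle hsum
    have h2 : Real.logb 2 (1 + p k) < c k := by
      rwa [div_lt_one (hc k)] at h1
    have h3 : 1 + p k < (2:ℝ) ^ (c k) :=
      (Real.logb_lt_iff_lt_rpow one_lt_two (by linarith [hp k])).1 h2
    linarith [hp k]
  refine ne_of_lt (lt_of_le_of_lt (measure_mono hsub) ?_)
  rw [volume_pi_pi]
  simp only [Real.volume_Ioo]
  exact ENNReal.prod_lt_top fun _ _ => ENNReal.ofReal_lt_top

open Real Set in
private lemma gk_meas_F {n : ℕ} (t : Fin (n + 1)) (R : Fin (n + 1) → ℝ) (r : ℝ) :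
    Measurable (Set.indicator {y : Fin n → ℝ | ∀ j, 0 < y j}
      (fun y => ENNReal.ofReal
        ((2:ℝ) ^ (r * (1 - ∑ j, Real.logb 2 (1 + y j) / R (t.succAbove j))) - 1))) := by
  have hA : MeasurableSet {y : Fin n → ℝ | ∀ j, 0 < y j} := by
    have : {y : Fin n → ℝ | ∀ j, 0 < y j} = Set.pi Set.univ (fun _ => Set.Ioi 0) := by
      ext p; simp [Set.mem_pi]
    rw [this]
    exact MeasurableSet.univ_pi fun _ => measurableSet_Ioi
  refine Measurable.indicator ?_ hA
  have hs : Measurable fun y : Fin n → ℝ =>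
      ∑ j, Real.logb 2 (1 + y j) / R (t.succAbove j) := by
    apply Finset.measurable_sum
    intro k _
    simp only [Real.logb]
    exact ((Real.measurable_log.comp
      (measurable_const.add (measurable_pi_apply k))).div_const _).div_const _
  have hpow : Measurable fun y : Fin n → ℝ =>
      (2:ℝ) ^ (r * (1 - ∑ j, Real.logb 2 (1 + y j) / R (t.succAbove j))) := by
    have hrw : ∀ u : ℝ, (2:ℝ) ^ u = Real.exp (Real.log 2 * u) := fun u =>
      Real.rpow_def_of_pos two_pos u
    simp_rw [hrw]
    exact Real.measurable_exp.comp
      (measurable_const.mul (measurable_const.mul ((measurable_const.sub hs))))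
  exact ENNReal.measurable_ofReal.comp (hpow.sub measurable_const)

open Real Set in
private lemma gk_slice_vol (n : ℕ) (t : Fin (n + 1)) (R : Fin (n + 1) → ℝ) {r : ℝ}
    (hr : 0 < r) :
    volume {p : Fin (n + 1) → ℝ | (∀ k, 0 < p k) ∧
        ∑ k, Real.logb 2 (1 + p k) / Function.update R t r k < 1}
      = ∫⁻ y : Fin n → ℝ, Set.indicator {y : Fin n → ℝ | ∀ j, 0 < y j}
          (fun y => ENNReal.ofReal
            ((2:ℝ) ^ (r * (1 - ∑ j, Real.logb 2 (1 + y j) / R (t.succAbove j))) - 1)) y := by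
  set S := {p : Fin (n + 1) → ℝ | (∀ k, 0 < p k) ∧
      ∑ k, Real.logb 2 (1 + p k) / Function.update R t r k < 1} with hSdef
  have hSm : MeasurableSet S := gk_meas_S _
  set e := MeasurableEquiv.piFinSuccAbove (fun _ : Fin (n + 1) => ℝ) t with he
  have mp := (volume_preserving_piFinSuccAbove (fun _ : Fin (n + 1) => ℝ) t).symm
  have h1 : volume S = volume (e.symm ⁻¹' S) :=
    (mp.measure_preimage hSm.nullMeasurableSet).symm
  have hpre : MeasurableSet (e.symm ⁻¹' S) := e.symm.measurable hSm
  have h2 : volume (e.symm ⁻¹' S)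
      = ((volume : Measure (Fin n → ℝ)).prod (volume : Measure ℝ))
          (Prod.swap ⁻¹' (e.symm ⁻¹' S)) := by
    rw [Measure.volume_eq_prod]
    exact ((Measure.measurePreserving_swap).measure_preimage hpre.nullMeasurableSet).symm
  rw [h1, h2, Measure.prod_apply (measurable_swap hpre)]
  refine lintegral_congr fun w => ?_
  have hmem : ∀ x : ℝ, e.symm (x, w) ∈ S ↔
      ((0 < x ∧ ∀ j, 0 < w j) ∧
        Real.logb 2 (1 + x) / r
          + ∑ j, Real.logb 2 (1 + w j) / R (t.succAbove j) < 1) := by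
    intro x
    have hins : e.symm (x, w) = t.insertNth x w := rfl
    rw [hSdef]
    simp only [Set.mem_setOf_eq, hins]
    rw [Fin.forall_iff_succAbove t, Fin.sum_univ_succAbove _ t]
    simp [Function.update_of_ne (Fin.succAbove_ne t _)]
  have hset : Prod.mk w ⁻¹' (Prod.swap ⁻¹' (e.symm ⁻¹' S)) = {x : ℝ | e.symm (x, w) ∈ S} := rfl
  rw [hset]
  by_cases hw : ∀ j, 0 < w j
  · set sw := ∑ j, Real.logb 2 (1 + w j) / R (t.succAbove j) with hsw
    have hEq : {x : ℝ | e.symm (x, w) ∈ S} = Set.Ioo 0 ((2:ℝ) ^ (r * (1 - sw)) - 1) := by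
      ext x
      rw [Set.mem_setOf_eq, hmem x, Set.mem_Ioo]
      constructor
      · rintro ⟨⟨hx, -⟩, hsum⟩
        refine ⟨hx, ?_⟩
        have h2' : Real.logb 2 (1 + x) / r < 1 - sw := by linarith
        have h3 : Real.logb 2 (1 + x) < r * (1 - sw) := by
          rw [div_lt_iff₀ hr] at h2'; linarith [h2']
        have h4 : 1 + x < (2:ℝ) ^ (r * (1 - sw)) :=
          (Real.logb_lt_iff_lt_rpow one_lt_two (by linarith)).1 h3
        linarith
      · rintro ⟨hx, hlt⟩
        have h4 : 1 + x < (2:ℝ) ^ (r * (1 - sw)) := by linarith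
        have h3 : Real.logb 2 (1 + x) < r * (1 - sw) :=
          (Real.logb_lt_iff_lt_rpow one_lt_two (by linarith)).2 h4
        have h2' : Real.logb 2 (1 + x) / r < 1 - sw := by
          rw [div_lt_iff₀ hr]; linarith
        exact ⟨⟨hx, hw⟩, by linarith⟩
    rw [hEq, Real.volume_Ioo, Set.indicator_of_mem (by exact hw), sub_zero]
  · have hEq : {x : ℝ | e.symm (x, w) ∈ S} = ∅ := by
      ext x
      rw [Set.mem_setOf_eq, hmem x]
      simp only [Set.mem_empty_iff_false, iff_false]
      rintro ⟨⟨-, hj⟩, -⟩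
      exact hw hj
    rw [hEq, Set.indicator_of_notMem (by exact hw)]
    simp

open Real Set in
private lemma gk_key_ineq {x y a b c : ℝ} (hx : 0 < x) (hy : 0 < y)
    (ha : 0 ≤ a) (hb : 0 ≤ b) (hab : a + b = 1) :
    ENNReal.ofReal ((2:ℝ) ^ ((a * x + b * y) * c) - 1)
      ≤ ENNReal.ofReal a * ENNReal.ofReal ((2:ℝ) ^ (x * c) - 1)
        + ENNReal.ofReal b * ENNReal.ofReal ((2:ℝ) ^ (y * c) - 1) := by
  have hconv : (2:ℝ) ^ ((a * x + b * y) * c)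
      ≤ a * (2:ℝ) ^ (x * c) + b * (2:ℝ) ^ (y * c) := by
    have h := convexOn_exp.2 (Set.mem_univ (x * c * Real.log 2))
      (Set.mem_univ (y * c * Real.log 2)) ha hb hab
    simp only [smul_eq_mul] at h
    rw [Real.rpow_def_of_pos two_pos, Real.rpow_def_of_pos two_pos,
      Real.rpow_def_of_pos two_pos]
    calc Real.exp (Real.log 2 * ((a * x + b * y) * c))
        = Real.exp (a * (x * c * Real.log 2) + b * (y * c * Real.log 2)) := by ring_nf
      _ ≤ a * Real.exp (x * c * Real.log 2) + b * Real.exp (y * c * Real.log 2) := h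
      _ = a * Real.exp (Real.log 2 * (x * c)) + b * Real.exp (Real.log 2 * (y * c)) := by
          ring_nf
  rcases le_or_gt c 0 with hc | hc
  · have hz : 0 < a * x + b * y := by
      rcases ha.eq_or_lt with h | h
      · rw [← h, zero_mul, zero_add]
        have : b = 1 := by linarith
        rw [this, one_mul]; exact hy
      · exact add_pos_of_pos_of_nonneg (mul_pos h hx) (mul_nonneg hb hy.le)
    have h1 : (2:ℝ) ^ ((a * x + b * y) * c) ≤ 1 :=
      Real.rpow_le_one_of_one_le_of_nonpos one_le_two
        (mul_nonpos_of_nonneg_of_nonpos hz.le hc)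
    rw [ENNReal.ofReal_eq_zero.2 (by linarith)]
    exact zero_le
  · have h1 : (1:ℝ) ≤ (2:ℝ) ^ (x * c) := by
      have := Real.rpow_le_rpow_of_exponent_le one_le_two
        (le_of_lt (mul_pos hx hc) : (0:ℝ) ≤ x * c)
      rwa [Real.rpow_zero] at this
    have h2 : (1:ℝ) ≤ (2:ℝ) ^ (y * c) := by
      have := Real.rpow_le_rpow_of_exponent_le one_le_two
        (le_of_lt (mul_pos hy hc) : (0:ℝ) ≤ y * c)
      rwa [Real.rpow_zero] at this
    calc ENNReal.ofReal ((2:ℝ) ^ ((a * x + b * y) * c) - 1)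
        ≤ ENNReal.ofReal (a * ((2:ℝ) ^ (x * c) - 1) + b * ((2:ℝ) ^ (y * c) - 1)) := by
          apply ENNReal.ofReal_le_ofReal; nlinarith
      _ = ENNReal.ofReal (a * ((2:ℝ) ^ (x * c) - 1))
            + ENNReal.ofReal (b * ((2:ℝ) ^ (y * c) - 1)) :=
          ENNReal.ofReal_add (mul_nonneg ha (by linarith)) (mul_nonneg hb (by linarith))
      _ = ENNReal.ofReal a * ENNReal.ofReal ((2:ℝ) ^ (x * c) - 1)
            + ENNReal.ofReal b * ENNReal.ofReal ((2:ℝ) ^ (y * c) - 1) := by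
          rw [ENNReal.ofReal_mul ha, ENNReal.ofReal_mul hb]

theorem gK_convex_in_each_arg (K : ℕ) (hK : 1 ≤ K) (t : Fin K) (R : Fin K → ℝ)
    (hR : ∀ k, k ≠ t → 0 < R k) :
    ConvexOn ℝ (Set.Ioi (0 : ℝ)) (fun r => gK K (Function.update R t r)) := by
  obtain ⟨n, rfl⟩ : ∃ n, K = n + 1 := ⟨K - 1, by omega⟩
  refine ⟨convex_Ioi 0, fun x hx y hy a b ha hb hab => ?_⟩
  have hx' : 0 < x := hx
  have hy' : 0 < y := hy
  have hz : 0 < a * x + b * y := by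
    rcases ha.eq_or_lt with h | h
    · rw [← h, zero_mul, zero_add]
      have : b = 1 := by linarith
      rw [this, one_mul]; exact hy'
    · exact add_pos_of_pos_of_nonneg (mul_pos h hx') (mul_nonneg hb hy'.le)
  simp only [smul_eq_mul]
  -- notation for the indicator integrands
  set F : ℝ → (Fin n → ℝ) → ENNReal := fun r =>
    Set.indicator {w : Fin n → ℝ | ∀ j, 0 < w j}
      (fun w => ENNReal.ofReal
        ((2:ℝ) ^ (r * (1 - ∑ j, Real.logb 2 (1 + w j) / R (t.succAbove j))) - 1)) with hF
  have hvol : ∀ {r : ℝ}, 0 < r →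
      volume {p : Fin (n + 1) → ℝ | (∀ k, 0 < p k) ∧
        ∑ k, Real.logb 2 (1 + p k) / Function.update R t r k < 1}
        = ∫⁻ w, F r w := fun hr => gk_slice_vol n t R hr
  have hupd : ∀ {r : ℝ}, 0 < r → ∀ k, 0 < Function.update R t r k := by
    intro r hr k
    by_cases hk : k = t
    · subst hk; rw [Function.update_self]; exact hr
    · rw [Function.update_of_ne hk]; exact hR k hk
  have hfinx : (∫⁻ w, F x w) ≠ ⊤ := by
    rw [← hvol hx']; exact gk_S_finite _ (hupd hx')
  have hfiny : (∫⁻ w, F y w) ≠ ⊤ := by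
    rw [← hvol hy']; exact gk_S_finite _ (hupd hy')
  have hpoint : ∀ w, F (a * x + b * y) w
      ≤ ENNReal.ofReal a * F x w + ENNReal.ofReal b * F y w := by
    intro w
    by_cases hw : w ∈ {w : Fin n → ℝ | ∀ j, 0 < w j}
    · rw [hF]
      simp only [Set.indicator_of_mem hw]
      exact gk_key_ineq hx' hy' ha hb hab
    · rw [hF]
      simp only [Set.indicator_of_notMem hw, mul_zero, add_zero]
      exact zero_le
  have hchain : (∫⁻ w, F (a * x + b * y) w)
      ≤ ENNReal.ofReal a * (∫⁻ w, F x w) + ENNReal.ofReal b * (∫⁻ w, F y w) := by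
    calc (∫⁻ w, F (a * x + b * y) w)
        ≤ ∫⁻ w, (ENNReal.ofReal a * F x w + ENNReal.ofReal b * F y w) :=
          lintegral_mono hpoint
      _ = ENNReal.ofReal a * (∫⁻ w, F x w) + ENNReal.ofReal b * (∫⁻ w, F y w) := by
          rw [lintegral_add_left ((gk_meas_F t R x).const_mul _),
            lintegral_const_mul _ (gk_meas_F t R x),
            lintegral_const_mul _ (gk_meas_F t R y)]
  have hRHSne : ENNReal.ofReal a * (∫⁻ w, F x w) + ENNReal.ofReal b * (∫⁻ w, F y w) ≠ ⊤ :=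
    ENNReal.add_ne_top.2 ⟨ENNReal.mul_ne_top ENNReal.ofReal_ne_top hfinx,
      ENNReal.mul_ne_top ENNReal.ofReal_ne_top hfiny⟩
  show gK (n + 1) (Function.update R t (a * x + b * y))
      ≤ a * gK (n + 1) (Function.update R t x) + b * gK (n + 1) (Function.update R t y)
  unfold gK
  rw [hvol hz, hvol hx', hvol hy']
  calc (∫⁻ w, F (a * x + b * y) w).toReal
      ≤ (ENNReal.ofReal a * (∫⁻ w, F x w) + ENNReal.ofReal b * (∫⁻ w, F y w)).toReal :=
        ENNReal.toReal_mono hRHSne hchain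
    _ = a * (∫⁻ w, F x w).toReal + b * (∫⁻ w, F y w).toReal := by
        rw [ENNReal.toReal_add (ENNReal.mul_ne_top ENNReal.ofReal_ne_top hfinx)
          (ENNReal.mul_ne_top ENNReal.ofReal_ne_top hfiny),
          ENNReal.toReal_mul, ENNReal.toReal_mul,
          ENNReal.toReal_ofReal ha, ENNReal.toReal_ofReal hb]
end

section
/- Let K ≥ 1 and let R_1,…,R_K be positive reals that are pairwise distinct. Then g_K(R_1,…,R_K) = (−1)^K + Σ_{p=1}^K 2^{R_p} · Π_{k=1, k≠p}^K R_k/(R_p − R_k). In particular, the K-dimensional volume of the region { t ∈ (0,∞)^K : Σ_{k=1}^K log₂(1+t_k)/R_k < 1 } admits this closed form. -/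
open MeasureTheory Finset

open Polynomial

lemma erase_succ_prod (n : ℕ) (g : Fin (n+1) → ℝ) (p : Fin n) :
    ∏ j ∈ (univ : Finset (Fin (n+1))).erase p.succ, g j
      = g 0 * ∏ q ∈ (univ : Finset (Fin n)).erase p, g q.succ := by
  have h0 : (0 : Fin (n+1)) ∈ (univ : Finset (Fin (n+1))).erase p.succ :=
    mem_erase.mpr ⟨(Fin.succ_ne_zero p).symm, mem_univ _⟩
  rw [← Finset.mul_prod_erase _ _ h0]
  congr 1
  have : ((univ : Finset (Fin (n+1))).erase p.succ).erase 0
      = ((univ.erase p).map ⟨Fin.succ, Fin.succ_injective _⟩) := by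
    rw [Finset.map_erase, erase_right_comm]
    congr 1
    rw [Fin.univ_succ, Finset.erase_cons]
  rw [this, Finset.prod_map]
  rfl

lemma injvcons (n : ℕ) (a : Fin n → ℝ) (ha : ∀ p, 0 < a p)
    (hd : ∀ p q : Fin n, p ≠ q → a p ≠ a q) :
    Set.InjOn (Fin.cons 0 a : Fin (n+1) → ℝ) ((univ : Finset (Fin (n+1))) : Set (Fin (n+1))) := by
  intro i _ j _ hij
  induction i using Fin.cases with
  | zero =>
    induction j using Fin.cases with
    | zero => rfl
    | succ q => exact absurd hij.symm (ne_of_gt (by simpa using ha q))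
  | succ p =>
    induction j using Fin.cases with
    | zero => exact absurd hij (ne_of_gt (by simpa using ha p))
    | succ q =>
      by_contra h
      exact hd p q (fun hpq => h (by rw [hpq])) (by simpa using hij)

lemma lagrange_aux (n : ℕ) (a : Fin n → ℝ) (ha : ∀ p, 0 < a p)
    (hd : ∀ p q : Fin n, p ≠ q → a p ≠ a q) (x : ℝ) (hx0 : 0 < x) (hx : ∀ p, x ≠ a p) :
    ∑ p, (∏ k ∈ univ.erase p, a k / (a p - a k)) * (x / (x - a p))
      = (∏ k, a k / (x - a k)) - (-1 : ℝ) ^ n := by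
  classical
  set P : ℝ := ∏ k, a k with hP
  set c : ℝ := (-1 : ℝ) ^ n with hc
  set v : Fin (n + 1) → ℝ := Fin.cons 0 a with hv
  have hinj := injvcons n a ha hd
  set F : ℝ[X] := C P - C c * Lagrange.nodal univ a with hF
  have hdeg : F.degree < ((univ : Finset (Fin (n+1))).card : ℕ) := by
    rw [card_univ, Fintype.card_fin]
    refine lt_of_le_of_lt (degree_sub_le _ _) ?_
    rw [max_lt_iff]
    refine ⟨lt_of_le_of_lt degree_C_le ?_, ?_⟩
    · exact_mod_cast WithBot.coe_lt_coe.mpr (Nat.succ_pos n)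
    · refine lt_of_le_of_lt (degree_mul_le _ _) ?_
      rw [Lagrange.degree_nodal, card_univ, Fintype.card_fin]
      refine lt_of_le_of_lt (add_le_add degree_C_le le_rfl) ?_
      rw [zero_add]
      exact_mod_cast Nat.lt_succ_self n
  have key := Lagrange.eq_interpolate (f := F) hinj hdeg
  have hevalkey : ∑ i : Fin (n+1),
      (F.eval (v i)) * ∏ j ∈ univ.erase i, ((v i - v j)⁻¹ * (x - v j)) = F.eval x := by
    have := congrArg (Polynomial.eval x) key
    rw [Lagrange.interpolate_apply] at this
    simp only [eval_finset_sum, eval_mul, eval_C, Lagrange.basis, eval_prod,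
      Lagrange.basisDivisor, eval_mul, eval_C, eval_sub, eval_X] at this
    exact this.symm
  have hcc : c * c = 1 := by rw [hc, ← mul_pow]; norm_num
  have heval0 : F.eval (v 0) = 0 := by
    have hnodal : (Lagrange.nodal univ a).eval 0 = c * P := by
      rw [Lagrange.eval_nodal]
      rw [Finset.prod_congr rfl (fun k _ => show (0:ℝ) - a k = -1 * a k by ring),
        Finset.prod_mul_distrib, prod_const, card_univ, Fintype.card_fin, hc, hP]
    simp only [hv, Fin.cons_zero, hF, eval_sub, eval_mul, eval_C, hnodal]
    rw [← mul_assoc, hcc, one_mul, sub_self]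
  have hevalsucc : ∀ p : Fin n, F.eval (v p.succ) = P := by
    intro p
    simp only [hv, Fin.cons_succ, hF, eval_sub, eval_mul, eval_C]
    rw [Lagrange.eval_nodal_at_node (mem_univ p), mul_zero, sub_zero]
  -- rewrite the eval sum
  rw [Fin.sum_univ_succ, heval0, zero_mul, zero_add] at hevalkey
  have hFx : F.eval x = P - c * ∏ k, (x - a k) := by
    simp only [hF, eval_sub, eval_mul, eval_C, Lagrange.eval_nodal]
  rw [hFx] at hevalkey
  simp only [hevalsucc] at hevalkey
  -- each summand simplified via erase_succ_prod
  have hsummand : ∀ p : Fin n,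
      P * ∏ j ∈ univ.erase p.succ, ((v p.succ - v j)⁻¹ * (x - v j))
        = P * ((a p)⁻¹ * x * ∏ q ∈ univ.erase p, ((a p - a q)⁻¹ * (x - a q))) := by
    intro p
    rw [erase_succ_prod n (fun j => (v p.succ - v j)⁻¹ * (x - v j)) p]
    simp only [hv, Fin.cons_zero, Fin.cons_succ, sub_zero]
    try ring
  simp only [hsummand] at hevalkey
  -- now conclude by multiplying the goal by N
  set N : ℝ := ∏ k, (x - a k) with hN
  have hNne : N ≠ 0 := prod_ne_zero_iff.mpr fun k _ => sub_ne_zero.mpr (hx k)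
  apply mul_right_cancel₀ hNne
  rw [Finset.sum_mul]
  have hterm : ∀ p : Fin n,
      (∏ k ∈ univ.erase p, a k / (a p - a k)) * (x / (x - a p)) * N
        = P * ((a p)⁻¹ * x * ∏ q ∈ univ.erase p, ((a p - a q)⁻¹ * (x - a q))) := by
    intro p
    have hxp : x - a p ≠ 0 := sub_ne_zero.mpr (hx p)
    have hap : a p ≠ 0 := ne_of_gt (ha p)
    rw [hN, ← Finset.mul_prod_erase univ (fun k => x - a k) (mem_univ p), hP,
      ← Finset.mul_prod_erase univ a (mem_univ p)]
    set A : ℝ := ∏ k ∈ univ.erase p, a k with hA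
    set B : ℝ := ∏ k ∈ univ.erase p, (a p - a k)⁻¹ with hB
    set C : ℝ := ∏ k ∈ univ.erase p, (x - a k) with hC
    have h1 : x * (x - a p)⁻¹ * (x - a p) = x := by field_simp
    have h2 : a p * (a p)⁻¹ = 1 := mul_inv_cancel₀ hap
    calc (∏ k ∈ univ.erase p, a k / (a p - a k)) * (x / (x - a p)) * ((x - a p) * C)
        = (A * B) * (x / (x - a p)) * ((x - a p) * C) := by
          rw [hA, hB, ← Finset.prod_mul_distrib]
          simp only [div_eq_mul_inv]
      _ = x * (A * B * C) := by
          rw [div_eq_mul_inv]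
          linear_combination (A * B * C) * h1
      _ = a p * A * ((a p)⁻¹ * x * (B * C)) := by linear_combination (-(A * B * C * x)) * h2
      _ = a p * A * ((a p)⁻¹ * x * ∏ q ∈ univ.erase p, (a p - a q)⁻¹ * (x - a q)) := by
          rw [hB, hC, ← Finset.prod_mul_distrib]
  simp only [hterm]
  rw [hevalkey, sub_mul]
  congr 1
  rw [hP, hN, ← Finset.prod_mul_distrib]
  exact (Finset.prod_congr rfl fun k _ =>
    (div_mul_cancel₀ (a k) (sub_ne_zero.mpr (hx k)))).symm

def Sset (K : ℕ) (R : Fin K → ℝ) : Set (Fin K → ℝ) :=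
  {t | (∀ k, 0 < t k) ∧ ∑ k, Real.logb 2 (1 + t k) / R k < 1}

noncomputable def cf (K : ℕ) (R : Fin K → ℝ) : ℝ :=
  (-1 : ℝ) ^ K + ∑ p, (2 : ℝ) ^ (R p) * ∏ k ∈ univ.erase p, R k / (R p - R k)

lemma measurableSet_Sset (K : ℕ) (R : Fin K → ℝ) : MeasurableSet (Sset K R) := by
  have hrw : Sset K R = (⋂ k, {t : Fin K → ℝ | 0 < t k}) ∩
      {t : Fin K → ℝ | (∑ k, Real.logb 2 (1 + t k) / R k) < 1} := by
    ext t; simp [Sset, Set.mem_iInter]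
  rw [hrw]
  refine MeasurableSet.inter ?_ ?_
  · exact MeasurableSet.iInter fun k => measurableSet_lt measurable_const (measurable_pi_apply k)
  · refine measurableSet_lt ?_ measurable_const
    refine Finset.measurable_sum _ fun k _ => Measurable.div_const ?_ _
    exact (Real.measurable_log.comp ((measurable_pi_apply k).const_add 1)).div_const _

lemma Sset_subset_box (K : ℕ) (R : Fin K → ℝ) (hR : ∀ k, 0 < R k) :
    Sset K R ⊆ Set.pi Set.univ fun k => Set.Ioo (0 : ℝ) ((2 : ℝ) ^ (R k) - 1) := by
  rintro t ⟨hpos, hsum⟩ k _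
  have hnn : ∀ j, 0 ≤ Real.logb 2 (1 + t j) / R j := by
    intro j
    apply div_nonneg _ (hR j).le
    apply Real.logb_nonneg one_lt_two
    linarith [hpos j]
  have hk : Real.logb 2 (1 + t k) / R k < 1 :=
    lt_of_le_of_lt (Finset.single_le_sum (fun j _ => hnn j) (mem_univ k)) hsum
  have hlogb : Real.logb 2 (1 + t k) < R k := (div_lt_one (hR k)).mp hk
  have h2 : 1 + t k < (2 : ℝ) ^ (R k) :=
    (Real.logb_lt_iff_lt_rpow one_lt_two (by linarith [hpos k])).mp hlogb
  exact ⟨hpos k, by linarith⟩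

lemma volume_Sset_lt_top (K : ℕ) (R : Fin K → ℝ) (hR : ∀ k, 0 < R k) :
    volume (Sset K R) < ⊤ := by
  refine lt_of_le_of_lt (measure_mono (Sset_subset_box K R hR)) ?_
  rw [volume_pi_pi]
  exact ENNReal.prod_lt_top fun k _ => (by simp : volume (Set.Ioo (0:ℝ) _) < ⊤)

lemma gK0 (R : Fin 0 → ℝ) : (volume (Sset 0 R)).toReal = 1 := by
  have h : Sset 0 R = Set.univ := by
    ext t
    simp only [Sset, Set.mem_setOf_eq, Set.mem_univ, iff_true]
    exact ⟨fun k => k.elim0, by simp⟩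
  rw [h]
  have : (volume : Measure (Fin 0 → ℝ)) Set.univ = 1 := by
    rw [show (volume : Measure (Fin 0 → ℝ)) = Measure.pi fun _ => volume from rfl,
      Measure.pi_univ]
    simp
  rw [this, ENNReal.toReal_one]


def Tset (n : ℕ) (R : Fin (n+1) → ℝ) : Set (ℝ × (Fin n → ℝ)) :=
  {z | (0 < z.1 ∧ ∀ j, 0 < z.2 j) ∧
    Real.logb 2 (1 + z.1) / R 0 + ∑ j, Real.logb 2 (1 + z.2 j) / R j.succ < 1}

lemma measurableSet_Tset (n : ℕ) (R : Fin (n+1) → ℝ) : MeasurableSet (Tset n R) := by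
  have hrw : Tset n R = ({z : ℝ × (Fin n → ℝ) | 0 < z.1} ∩ ⋂ j, {z : ℝ × (Fin n → ℝ) | 0 < z.2 j})
      ∩ {z : ℝ × (Fin n → ℝ) |
        Real.logb 2 (1 + z.1) / R 0 + ∑ j, Real.logb 2 (1 + z.2 j) / R j.succ < 1} := by
    ext z; simp [Tset, Set.mem_iInter, and_assoc]
  rw [hrw]
  have hm1 : Measurable fun z : ℝ × (Fin n → ℝ) => Real.logb 2 (1 + z.1) / R 0 :=
    ((Real.measurable_log.comp (measurable_fst.const_add 1)).div_const _).div_const _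
  have hm2 : Measurable fun z : ℝ × (Fin n → ℝ) => ∑ j, Real.logb 2 (1 + z.2 j) / R j.succ :=
    Finset.measurable_sum _ fun j _ =>
      ((Real.measurable_log.comp (((measurable_pi_apply j).comp measurable_snd).const_add 1)
        ).div_const _).div_const _
  refine MeasurableSet.inter (MeasurableSet.inter ?_ (MeasurableSet.iInter fun j => ?_)) ?_
  · exact measurableSet_lt measurable_const measurable_fst
  · exact measurableSet_lt measurable_const (measurable_snd.eval)
  · exact measurableSet_lt (hm1.add hm2) measurable_const

lemma volume_Sset_eq (n : ℕ) (R : Fin (n+1) → ℝ) :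
    volume (Sset (n+1) R) = ∫⁻ x : ℝ, volume (Prod.mk x ⁻¹' Tset n R) := by
  have hmp := measurePreserving_piFinSuccAbove (fun _ : Fin (n+1) => (volume : Measure ℝ)) 0
  have hpre : (MeasurableEquiv.piFinSuccAbove (fun _ : Fin (n+1) => ℝ) 0) ⁻¹' (Tset n R)
      = Sset (n+1) R := by
    ext t
    simp only [Set.mem_preimage, MeasurableEquiv.piFinSuccAbove_apply, Tset, Sset,
      Set.mem_setOf_eq, Fin.zero_succAbove, Fin.insertNthEquiv, Equiv.coe_fn_symm_mk,
      Fin.removeNth]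
    constructor
    · rintro ⟨⟨h0, hs⟩, hsum⟩
      refine ⟨Fin.cases h0 hs, ?_⟩
      rw [Fin.sum_univ_succ]
      exact hsum
    · rintro ⟨hpos, hsum⟩
      rw [Fin.sum_univ_succ] at hsum
      exact ⟨⟨hpos 0, fun j => hpos j.succ⟩, hsum⟩
  calc volume (Sset (n+1) R)
      = ((volume : Measure ℝ).prod (volume : Measure (Fin n → ℝ))) (Tset n R) := by
        rw [← hpre]
        exact hmp.measure_preimage (measurableSet_Tset n R).nullMeasurableSet
    _ = ∫⁻ x : ℝ, volume (Prod.mk x ⁻¹' Tset n R) :=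
        Measure.prod_apply (measurableSet_Tset n R)

lemma slice_eq_empty (n : ℕ) (R : Fin (n+1) → ℝ) (hR : ∀ k, 0 < R k) (x : ℝ)
    (hx : x ∉ Set.Ioo (0:ℝ) ((2:ℝ) ^ (R 0) - 1)) : Prod.mk x ⁻¹' Tset n R = ∅ := by
  ext y
  simp only [Set.mem_preimage, Tset, Set.mem_setOf_eq, Set.mem_empty_iff_false, iff_false]
  rintro ⟨⟨hx0, hy⟩, hsum⟩
  rw [Set.mem_Ioo, not_and] at hx
  have hxM : (2:ℝ) ^ (R 0) - 1 ≤ x := not_lt.mp (hx hx0)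
  have h1x : (0:ℝ) < 1 + x := by linarith
  have hlogb : R 0 ≤ Real.logb 2 (1 + x) := by
    rw [Real.le_logb_iff_rpow_le one_lt_two h1x]
    linarith
  have h1 : (1:ℝ) ≤ Real.logb 2 (1 + x) / R 0 := (one_le_div (hR 0)).mpr hlogb
  have h2 : 0 ≤ ∑ j, Real.logb 2 (1 + y j) / R j.succ := by
    apply Finset.sum_nonneg
    intro j _
    exact div_nonneg (Real.logb_nonneg one_lt_two (by linarith [hy j])) (hR j.succ).le
  linarith

lemma slice_eq_Sset (n : ℕ) (R : Fin (n+1) → ℝ) (hR : ∀ k, 0 < R k) (x : ℝ)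
    (hx : x ∈ Set.Ioo (0:ℝ) ((2:ℝ) ^ (R 0) - 1)) :
    Prod.mk x ⁻¹' Tset n R
      = Sset n (fun j => (1 - Real.logb 2 (1 + x) / R 0) * R j.succ) := by
  obtain ⟨hx0, hxM⟩ := hx
  have h1x : (0:ℝ) < 1 + x := by linarith
  have hc : 0 < 1 - Real.logb 2 (1 + x) / R 0 := by
    have : Real.logb 2 (1 + x) < R 0 := by
      rw [Real.logb_lt_iff_lt_rpow one_lt_two h1x]
      linarith
    have := (div_lt_one (hR 0)).mpr this
    linarith
  set c : ℝ := 1 - Real.logb 2 (1 + x) / R 0 with hcdef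
  ext y
  simp only [Set.mem_preimage, Tset, Sset, Set.mem_setOf_eq, hx0, true_and]
  constructor
  · rintro ⟨hy, hsum⟩
    refine ⟨hy, ?_⟩
    have hlt : ∑ j, Real.logb 2 (1 + y j) / R j.succ < c := by
      rw [hcdef]; linarith
    have := (div_lt_one hc).mpr hlt
    rw [Finset.sum_div] at this
    refine lt_of_eq_of_lt (Finset.sum_congr rfl fun j _ => ?_) this
    rw [div_div, mul_comm c (R j.succ)]
  · rintro ⟨hy, hsum⟩
    refine ⟨hy, ?_⟩
    have h2 : (∑ j, Real.logb 2 (1 + y j) / R j.succ) / c < 1 := by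
      rw [Finset.sum_div]
      convert hsum using 2 with j
      rw [div_div, mul_comm c (R j.succ)]
    have := (div_lt_one hc).mp h2
    rw [hcdef] at this; linarith

lemma erase_zero_prod (n : ℕ) (g : Fin (n+1) → ℝ) :
    ∏ j ∈ (univ : Finset (Fin (n+1))).erase 0, g j = ∏ q : Fin n, g q.succ := by
  have : (univ : Finset (Fin (n+1))).erase 0
      = univ.map ⟨Fin.succ, Fin.succ_injective _⟩ := by
    rw [Fin.univ_succ, Finset.erase_cons]
  rw [this, Finset.prod_map]
  rfl

-- the closed form of the inner integrand after scaling
lemma cf_scale (n : ℕ) (a : Fin n → ℝ) (ha : ∀ p, 0 < a p) (c : ℝ) (hc : 0 < c) :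
    ((-1 : ℝ) ^ n + ∑ p, (2 : ℝ) ^ (c * a p) *
        ∏ k ∈ univ.erase p, (c * a k) / (c * a p - c * a k))
      = (-1 : ℝ) ^ n + ∑ p, (2 : ℝ) ^ (c * a p) *
        ∏ k ∈ univ.erase p, a k / (a p - a k) := by
  congr 1
  refine Finset.sum_congr rfl fun p _ => ?_
  congr 1
  refine Finset.prod_congr rfl fun k _ => ?_
  rw [← mul_sub, mul_div_mul_left _ _ (ne_of_gt hc)]

lemma rpow_scale (x c s R0 : ℝ) (h1x : (0:ℝ) < 1 + x) (hc : c = 1 - Real.logb 2 (1+x) / R0) :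
    (2:ℝ) ^ (c * s) = (2:ℝ) ^ s * (1 + x) ^ (-(s / R0)) := by
  have h : c * s = s + Real.logb 2 (1+x) * (-(s / R0)) := by rw [hc]; ring
  rw [h, Real.rpow_add (by norm_num : (0:ℝ) < 2), Real.rpow_mul (by norm_num : (0:ℝ) ≤ 2),
    Real.rpow_logb (by norm_num) (by norm_num) h1x]

lemma cf_main : ∀ (K : ℕ) (R : Fin K → ℝ), (∀ k, 0 < R k) → (∀ k l, k ≠ l → R k ≠ R l) →
    (volume (Sset K R)).toReal = cf K R := by
  intro K
  induction K with
  | zero =>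
    intro R _ _
    rw [gK0]
    simp [cf]
  | succ n IH =>
    intro R hR hdist
    set a : Fin n → ℝ := fun j => R j.succ with ha_def
    have ha : ∀ p, 0 < a p := fun p => hR p.succ
    have had : ∀ p q : Fin n, p ≠ q → a p ≠ a q := fun p q hpq =>
      hdist p.succ q.succ (fun h => hpq (Fin.succ_injective _ h))
    have hx0 : 0 < R 0 := hR 0
    have hax : ∀ p, R 0 ≠ a p := fun p => hdist 0 p.succ (Fin.succ_ne_zero p).symm
    set M : ℝ := (2:ℝ) ^ (R 0) - 1 with hM_def
    have hM : 0 < M := by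
      have : (1:ℝ) = (2:ℝ) ^ (0:ℝ) := (Real.rpow_zero 2).symm
      have h2 : (2:ℝ) ^ (0:ℝ) < (2:ℝ) ^ (R 0) :=
        Real.rpow_lt_rpow_left_iff (by norm_num : (1:ℝ) < 2) |>.mpr hx0
      rw [Real.rpow_zero] at h2
      simp only [hM_def]; linarith
    set Pi : Fin n → ℝ := fun p => ∏ k ∈ univ.erase p, a k / (a p - a k) with hPi_def
    set ψ : ℝ → ℝ := fun x => (-1:ℝ)^n +
      ∑ p, Pi p * ((2:ℝ) ^ (a p) * (1 + x) ^ (-(a p / R 0))) with hψ_def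
    -- value of ψ as a slice volume
    have hψeq : ∀ x ∈ Set.Ioo (0:ℝ) M,
        (volume (Sset n (fun j => (1 - Real.logb 2 (1 + x) / R 0) * a j))).toReal = ψ x := by
      intro x hx
      have h1x : (0:ℝ) < 1 + x := by have := hx.1; linarith
      have hc : 0 < 1 - Real.logb 2 (1 + x) / R 0 := by
        have hlt : Real.logb 2 (1 + x) < R 0 := by
          rw [Real.logb_lt_iff_lt_rpow one_lt_two h1x]
          have := hx.2; simp only [hM_def] at this; linarith
        have := (div_lt_one hx0).mpr hlt
        linarith
      set c : ℝ := 1 - Real.logb 2 (1 + x) / R 0 with hc_def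
      have hpos : ∀ j, 0 < c * a j := fun j => mul_pos hc (ha j)
      have hdist' : ∀ p q : Fin n, p ≠ q → c * a p ≠ c * a q := fun p q hpq h =>
        had p q hpq (mul_left_cancel₀ (ne_of_gt hc) h)
      rw [IH _ hpos hdist']
      show cf n (fun j => c * a j) = ψ x
      rw [cf, hψ_def]
      have := cf_scale n a ha c hc
      simp only at this ⊢
      rw [this]
      congr 1
      refine Finset.sum_congr rfl fun p _ => ?_
      rw [rpow_scale x c (a p) (R 0) h1x hc_def, mul_comm]
    have hψnn : ∀ x ∈ Set.Ioo (0:ℝ) M, 0 ≤ ψ x := fun x hx =>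
      (hψeq x hx) ▸ ENNReal.toReal_nonneg
    -- indicator formula for the slices
    have hind : ∀ x : ℝ, volume (Prod.mk x ⁻¹' Tset n R)
        = Set.indicator (Set.Ioo (0:ℝ) M) (fun x => ENNReal.ofReal (ψ x)) x := by
      intro x
      by_cases hx : x ∈ Set.Ioo (0:ℝ) M
      · rw [Set.indicator_of_mem hx, slice_eq_Sset n R hR x (by simpa [hM_def] using hx)]
        rw [← hψeq x hx]
        rw [ENNReal.ofReal_toReal]
        exact (volume_Sset_lt_top n _ fun j =>
          mul_pos (by
            have h1x : (0:ℝ) < 1 + x := by have := hx.1; linarith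
            have hlt : Real.logb 2 (1 + x) < R 0 := by
              rw [Real.logb_lt_iff_lt_rpow one_lt_two h1x]
              have := hx.2; simp only [hM_def] at this; linarith
            have := (div_lt_one hx0).mpr hlt
            linarith) (ha j)).ne
      · rw [Set.indicator_of_notMem hx, slice_eq_empty n R hR x (by simpa [hM_def] using hx),
          measure_empty]
    -- continuity of ψ
    have hψcont : ContinuousOn ψ (Set.Icc (0:ℝ) M) := by
      rw [hψ_def]
      refine ContinuousOn.add continuousOn_const ?_
      refine continuousOn_finset_sum _ fun p _ => ?_
      refine ContinuousOn.mul continuousOn_const ?_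
      refine ContinuousOn.mul continuousOn_const ?_
      intro x hx
      have h1x : (0:ℝ) < 1 + x := by have := hx.1; linarith
      exact ((Real.continuousAt_rpow_const (1+x) _ (Or.inl (ne_of_gt h1x))).comp
        ((continuous_const.add continuous_id).continuousAt)).continuousWithinAt
    have hInt : IntegrableOn ψ (Set.Ioo 0 M) volume :=
      (hψcont.integrableOn_Icc).mono_set Set.Ioo_subset_Icc_self
    have h1 : volume (Sset (n+1) R) = ∫⁻ x in Set.Ioo (0:ℝ) M, ENNReal.ofReal (ψ x) := by
      rw [volume_Sset_eq n R]
      simp_rw [hind]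
      rw [lintegral_indicator measurableSet_Ioo]
    have h2 : (∫⁻ x in Set.Ioo (0:ℝ) M, ENNReal.ofReal (ψ x))
        = ENNReal.ofReal (∫ x in Set.Ioo (0:ℝ) M, ψ x) :=
      (ofReal_integral_eq_lintegral_ofReal hInt
        ((ae_restrict_iff' measurableSet_Ioo).mpr (ae_of_all _ hψnn))).symm
    have hI_nn : 0 ≤ ∫ x in Set.Ioo (0:ℝ) M, ψ x :=
      setIntegral_nonneg measurableSet_Ioo hψnn
    -- FTC
    set sfn : Fin n → ℝ := fun p => a p / R 0 with hs_def
    have hs_ne : ∀ p, (1:ℝ) - sfn p ≠ 0 := by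
      intro p h
      have : sfn p = 1 := by linarith [sub_eq_zero.mp h]
      have : a p = R 0 := by
        have := (div_eq_one_iff_eq (ne_of_gt hx0)).mp this
        exact this
      exact hax p this.symm
    set G : ℝ → ℝ := fun x => (-1:ℝ)^n * x +
      ∑ p, Pi p * ((2:ℝ)^(a p) * ((1+x) ^ (1 - sfn p) / (1 - sfn p))) with hG_def
    have hderiv : ∀ x ∈ Set.uIcc (0:ℝ) M, HasDerivAt G (ψ x) x := by
      intro x hx
      rw [Set.uIcc_of_le hM.le] at hx
      have h1x : (0:ℝ) < 1 + x := by have := hx.1; linarith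
      have hbase : HasDerivAt (fun y : ℝ => 1 + y) 1 x := by
        simpa using (hasDerivAt_id x).const_add (1:ℝ)
      have hterm : ∀ p : Fin n,
          HasDerivAt (fun y => Pi p * ((2:ℝ)^(a p) * ((1+y) ^ (1 - sfn p) / (1 - sfn p))))
            (Pi p * ((2:ℝ)^(a p) * (1+x) ^ (-(sfn p)))) x := by
        intro p
        have hd1 : HasDerivAt (fun y : ℝ => (1+y) ^ (1 - sfn p))
            ((1 - sfn p) * (1+x) ^ (1 - sfn p - 1)) x := by
          have := (Real.hasDerivAt_rpow_const (x := 1+x) (p := 1 - sfn p)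
            (Or.inl (ne_of_gt h1x))).comp x hbase
          simpa [Function.comp_def] using this
        have hd2 := ((hd1.div_const (1 - sfn p)).const_mul ((2:ℝ)^(a p))).const_mul (Pi p)
        have : (1 - sfn p) * (1+x) ^ (1 - sfn p - 1) / (1 - sfn p) = (1+x) ^ (-(sfn p)) := by
          rw [mul_div_cancel_left₀ _ (hs_ne p)]
          norm_num [show (1:ℝ) - sfn p - 1 = -(sfn p) by ring]
        rw [this] at hd2
        exact hd2
      have hlin : HasDerivAt (fun y : ℝ => (-1:ℝ)^n * y) ((-1:ℝ)^n) x := by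
        simpa using (hasDerivAt_id x).const_mul ((-1:ℝ)^n)
      have hsum := hlin.add (HasDerivAt.sum (u := Finset.univ) (fun p _ => hterm p))
      rw [hψ_def]
      have hGeq : G = (fun y : ℝ => (-1:ℝ)^n * y) + ∑ i, fun y : ℝ =>
          Pi i * ((2:ℝ)^(a i) * ((1+y) ^ (1 - sfn i) / (1 - sfn i))) := by
        ext y
        simp only [hG_def, _root_.Pi.add_apply, Finset.sum_apply]
      rw [hGeq]
      exact hsum
    have hIcalc : ∫ x in (0:ℝ)..M, ψ x = G M - G 0 :=
      intervalIntegral.integral_eq_sub_of_hasDerivAt hderiv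
        ((hψcont.mono (by rw [Set.uIcc_of_le hM.le] : Set.uIcc (0:ℝ) M ⊆ Set.Icc 0 M)
          ).intervalIntegrable)
    have hIoo_eq : ∫ x in Set.Ioo (0:ℝ) M, ψ x = ∫ x in (0:ℝ)..M, ψ x := by
      rw [intervalIntegral.integral_of_le hM.le, integral_Ioc_eq_integral_Ioo]
    -- final algebra
    have h1M : (1:ℝ) + M = (2:ℝ)^(R 0) := by rw [hM_def]; ring
    have hpowM : ∀ p : Fin n, ((1:ℝ)+M) ^ ((1:ℝ) - sfn p) = (2:ℝ)^(R 0 - a p) := by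
      intro p
      rw [h1M, ← Real.rpow_mul (by norm_num : (0:ℝ) ≤ 2)]
      congr 1
      rw [hs_def]
      field_simp
    have hexpand : G M - G 0 = (-1:ℝ)^n * M +
        ∑ p, Pi p * ((2:ℝ)^(a p) * (((2:ℝ)^(R 0 - a p) - 1)/(1 - sfn p))) := by
      rw [hG_def]
      simp only
      have e1 : ∀ p : Fin n, Pi p * ((2:ℝ)^(a p) * ((1+M) ^ ((1:ℝ) - sfn p) / (1 - sfn p)))
          = Pi p * ((2:ℝ)^(a p) * (((2:ℝ)^(R 0 - a p) - 1)/(1 - sfn p)))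
            + Pi p * ((2:ℝ)^(a p) * (((1:ℝ)+(0:ℝ)) ^ ((1:ℝ) - sfn p) / (1 - sfn p))) := by
        intro p
        rw [hpowM p]
        norm_num
        ring
      rw [Finset.sum_congr rfl fun p _ => e1 p, Finset.sum_add_distrib]
      ring
    have hterm2 : ∀ p : Fin n, Pi p * ((2:ℝ)^(a p) * (((2:ℝ)^(R 0 - a p) - 1)/(1 - sfn p)))
        = (2:ℝ)^(R 0) * (Pi p * (R 0/(R 0 - a p)))
          + (2:ℝ)^(a p) * (R 0/(a p - R 0) * Pi p) := by
      intro p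
      have hA : (2:ℝ)^(a p) * (2:ℝ)^(R 0 - a p) = (2:ℝ)^(R 0) := by
        rw [← Real.rpow_add (by norm_num : (0:ℝ) < 2)]
        congr 1
        ring
      have hne1 : R 0 - a p ≠ 0 := sub_ne_zero.mpr (hax p)
      have hne2 : a p - R 0 ≠ 0 := sub_ne_zero.mpr fun h => hax p h.symm
      rw [← hA, hs_def]
      field_simp
      ring
    have hlag : ∑ p, Pi p * (R 0/(R 0 - a p))
        = (∏ k, a k/(R 0 - a k)) - (-1:ℝ)^n := by
      simpa [hPi_def] using lagrange_aux n a ha had (R 0) hx0 hax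
    have hcf : cf (n+1) R = (-1:ℝ)^(n+1) + (2:ℝ)^(R 0) * (∏ q, a q/(R 0 - a q))
        + ∑ q, (2:ℝ)^(a q) * (R 0/(a q - R 0) * Pi q) := by
      rw [cf, Fin.sum_univ_succ]
      rw [erase_zero_prod n (fun k => R k / (R 0 - R k))]
      have hq : ∀ q : Fin n, ∏ k ∈ univ.erase q.succ, R k / (R q.succ - R k)
          = R 0/(a q - R 0) * Pi q := by
        intro q
        rw [erase_succ_prod n (fun k => R k / (R q.succ - R k)) q, hPi_def]
      rw [Finset.sum_congr rfl fun q _ => by rw [hq q]]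
      ring
    -- put it all together
    have hfinal : G M - G 0 = cf (n+1) R := by
      rw [hexpand, Finset.sum_congr rfl fun p _ => hterm2 p, Finset.sum_add_distrib,
        ← Finset.mul_sum, hlag, hcf, hM_def, pow_succ]
      ring
    show (volume (Sset (n+1) R)).toReal = cf (n+1) R
    rw [h1, h2, ENNReal.toReal_ofReal hI_nn, hIoo_eq, hIcalc, hfinal]


theorem gK_closed_form (K : ℕ) (hK : 1 ≤ K) (R : Fin K → ℝ)
    (hR : ∀ k, 0 < R k) (hdist : ∀ k l, k ≠ l → R k ≠ R l) :
    gK K R = (-1 : ℝ) ^ K +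
      ∑ p, (2 : ℝ) ^ (R p) * ∏ k ∈ univ.erase p, R k / (R p - R k) := by
  have h := cf_main K R hR hdist
  unfold cf at h
  unfold gK
  exact h
end

section
/- Let p : ℝ → ℝ be a function that is convex, nonnegative, and monotonically nondecreasing on the interval (0,∞). Then the function x ↦ x · (1 − p(x)) is concave on (0,∞). -/
theorem concave_rate_times_success (p : ℝ → ℝ)
    (hconv : ConvexOn ℝ (Set.Ioi (0 : ℝ)) p)
    (hnonneg : ∀ x ∈ Set.Ioi (0 : ℝ), 0 ≤ p x)
    (hmono : MonotoneOn p (Set.Ioi (0 : ℝ))) :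
    ConcaveOn ℝ (Set.Ioi (0 : ℝ)) (fun x => x * (1 - p x)) := by
  have hid : ConvexOn ℝ (Set.Ioi (0 : ℝ)) (id : ℝ → ℝ) := convexOn_id (convex_Ioi 0)
  have hmv : MonovaryOn (id : ℝ → ℝ) p (Set.Ioi (0 : ℝ)) := by
    intro i hi j hj hlt
    by_contra h
    exact absurd (hmono hj hi (le_of_not_ge h)) (not_le.mpr hlt)
  have hmul : ConvexOn ℝ (Set.Ioi (0 : ℝ)) ((id : ℝ → ℝ) * p) :=
    hid.mul hconv (fun x hx => le_of_lt hx) hnonneg hmv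
  have hlin : ConcaveOn ℝ (Set.Ioi (0 : ℝ)) (fun x : ℝ => x) :=
    (LinearMap.id : ℝ →ₗ[ℝ] ℝ).concaveOn (convex_Ioi 0)
  have := hlin.sub hmul
  convert this using 2 with x
  · rfl
  · rfl
  simp [mul_sub]
end
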